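/- Let f(x) = sin(x)(1 - 1/(8 sin(x/2)^3)) on (0, 2π) and let θ_c be its unique critical point in (0, π). If 0 < t₁ < θ_c < t₂ < 2π and f(t₁) ≥ f(t₂), then t₁ + t₂ > 2θ_c > 6π/5. -/

import Mathlib

open Real Set

noncomputable def f (x : ℝ) : ℝ := Real.sin x * (1 - 1 / (8 * (Real.sin (x/2))^3))

noncomputable def f1 (x : ℝ) : ℝ :=
  Real.cos x + (1 + Real.cos (x/2)^2) / (8 * Real.sin (x/2)^3)

noncomputable def f2v (x : ℝ) : ℝ :=
  -Real.sin x - Real.cos (x/2) * (5 + Real.cos (x/2)^2) / (16 * Real.sin (x/2)^4)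

noncomputable def f3v (x : ℝ) : ℝ :=
  -Real.cos x + (5 + 18 * Real.cos (x/2)^2 + Real.cos (x/2)^4) / (32 * Real.sin (x/2)^5)

lemma hs_half (x : ℝ) : HasDerivAt (fun y => Real.sin (y/2)) (Real.cos (x/2) * (1/2)) x :=
  by have := (Real.hasDerivAt_sin (x/2)).comp x ((hasDerivAt_id' x).div_const 2); exact this

lemma hc_half (x : ℝ) : HasDerivAt (fun y => Real.cos (y/2)) (-Real.sin (x/2) * (1/2)) x :=
  by have := (Real.hasDerivAt_cos (x/2)).comp x ((hasDerivAt_id' x).div_const 2); exact this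

lemma sinx_eq (x : ℝ) : Real.sin x = 2 * Real.sin (x/2) * Real.cos (x/2) := by
  have h := Real.sin_two_mul (x/2)
  rw [show 2 * (x/2) = x by ring] at h
  linarith

lemma cosx_eq (x : ℝ) : Real.cos x = 1 - 2 * Real.sin (x/2)^2 := by
  have h := Real.cos_two_mul (x/2)
  rw [show 2 * (x/2) = x by ring] at h
  have h2 := Real.sin_sq_add_cos_sq (x/2)
  nlinarith

lemma hasDerivAt_f {x : ℝ} (hs : Real.sin (x/2) ≠ 0) : HasDerivAt f (f1 x) x := by
  have h8 : (8 : ℝ) * Real.sin (x/2)^3 ≠ 0 :=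
    mul_ne_zero (by norm_num) (pow_ne_zero 3 hs)
  have hcube : HasDerivAt (fun y => 8 * Real.sin (y/2)^3)
      (8 * (3 * Real.sin (x/2)^2 * (Real.cos (x/2) * (1/2)))) x :=
    ((hs_half x).pow 3).const_mul 8
  have hdiv : HasDerivAt (fun y => 1 / (8 * Real.sin (y/2)^3))
      (-(8 * (3 * Real.sin (x/2)^2 * (Real.cos (x/2) * (1/2)))) / (8 * Real.sin (x/2)^3)^2) x := by
    rw [show (fun y => 1 / (8 * Real.sin (y/2)^3)) = (fun y => 8 * Real.sin (y/2)^3)⁻¹ from funext fun y => one_div _]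
    exact hcube.inv h8
  have hmain : HasDerivAt f
      (Real.cos x * (1 - 1 / (8 * Real.sin (x/2)^3)) +
       Real.sin x * (0 - (-(8 * (3 * Real.sin (x/2)^2 * (Real.cos (x/2) * (1/2)))) / (8 * Real.sin (x/2)^3)^2))) x :=
    (Real.hasDerivAt_sin x).mul ((hasDerivAt_const x (1:ℝ)).sub hdiv)
  convert hmain using 1
  have h3 := Real.sin_sq_add_cos_sq (x/2)
  unfold f1
  rw [sinx_eq x, cosx_eq x]
  field_simp
  linear_combination (-2) * h3

lemma hasDerivAt_f1 {x : ℝ} (hs : Real.sin (x/2) ≠ 0) : HasDerivAt f1 (f2v x) x := by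
  have h8 : (8 : ℝ) * Real.sin (x/2)^3 ≠ 0 :=
    mul_ne_zero (by norm_num) (pow_ne_zero 3 hs)
  have hnum : HasDerivAt (fun y => 1 + Real.cos (y/2)^2)
      (0 + 2 * Real.cos (x/2) ^ 1 * (-Real.sin (x/2) * (1/2))) x :=
    (hasDerivAt_const x (1:ℝ)).add ((hc_half x).pow 2)
  have hden : HasDerivAt (fun y => 8 * Real.sin (y/2)^3)
      (8 * (3 * Real.sin (x/2)^2 * (Real.cos (x/2) * (1/2)))) x :=
    ((hs_half x).pow 3).const_mul 8
  have hmain : HasDerivAt f1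
      (-Real.sin x + ((0 + 2 * Real.cos (x/2) ^ 1 * (-Real.sin (x/2) * (1/2))) * (8 * Real.sin (x/2)^3)
        - (1 + Real.cos (x/2)^2) * (8 * (3 * Real.sin (x/2)^2 * (Real.cos (x/2) * (1/2)))))
        / (8 * Real.sin (x/2)^3)^2) x :=
    (Real.hasDerivAt_cos x).add (hnum.div hden h8)
  convert hmain using 1
  have h3 := Real.sin_sq_add_cos_sq (x/2)
  unfold f2v
  field_simp
  linear_combination (32 * Real.cos (x/2)) * h3

lemma hasDerivAt_f2v {x : ℝ} (hs : Real.sin (x/2) ≠ 0) : HasDerivAt f2v (f3v x) x := by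
  have h16 : (16 : ℝ) * Real.sin (x/2)^4 ≠ 0 :=
    mul_ne_zero (by norm_num) (pow_ne_zero 4 hs)
  have hnum : HasDerivAt (fun y => Real.cos (y/2) * (5 + Real.cos (y/2)^2))
      ((-Real.sin (x/2) * (1/2)) * (5 + Real.cos (x/2)^2)
        + Real.cos (x/2) * (0 + 2 * Real.cos (x/2) ^ 1 * (-Real.sin (x/2) * (1/2)))) x :=
    (hc_half x).mul ((hasDerivAt_const x (5:ℝ)).add ((hc_half x).pow 2))
  have hden : HasDerivAt (fun y => 16 * Real.sin (y/2)^4)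
      (16 * (4 * Real.sin (x/2)^3 * (Real.cos (x/2) * (1/2)))) x :=
    ((hs_half x).pow 4).const_mul 16
  have hmain : HasDerivAt f2v
      (-Real.cos x - (((-Real.sin (x/2) * (1/2)) * (5 + Real.cos (x/2)^2)
        + Real.cos (x/2) * (0 + 2 * Real.cos (x/2) ^ 1 * (-Real.sin (x/2) * (1/2)))) * (16 * Real.sin (x/2)^4)
        - Real.cos (x/2) * (5 + Real.cos (x/2)^2) * (16 * (4 * Real.sin (x/2)^3 * (Real.cos (x/2) * (1/2)))))
        / (16 * Real.sin (x/2)^4)^2) x :=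
    ((Real.hasDerivAt_sin x).neg).sub (hnum.div hden h16)
  convert hmain using 1
  have h3 := Real.sin_sq_add_cos_sq (x/2)
  unfold f3v
  field_simp
  linear_combination (-160 - 96 * Real.cos (x/2)^2) * h3

lemma sin_half_pos {x : ℝ} (hx : x ∈ Ioo (0:ℝ) (2*π)) : 0 < Real.sin (x/2) :=
  Real.sin_pos_of_pos_of_lt_pi (by linarith [hx.1]) (by linarith [hx.2])

lemma f3v_pos {x : ℝ} (hx : x ∈ Ioo (0:ℝ) (2*π)) : 0 < f3v x := by
  have hs := sin_half_pos hx
  have hs1 : Real.sin (x/2) ≤ 1 := Real.sin_le_one _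
  have h3 := Real.sin_sq_add_cos_sq (x/2)
  have hc := cosx_eq x
  unfold f3v
  have key : Real.cos x < (5 + 18 * Real.cos (x/2)^2 + Real.cos (x/2)^4) / (32 * Real.sin (x/2)^5) := by
    rw [lt_div_iff₀ (by positivity)]
    rw [hc]
    nlinarith [sq_nonneg (Real.sin (x/2)), sq_nonneg (Real.cos (x/2)), pow_pos hs 5,
      pow_pos hs 7, sq_nonneg (Real.sin (x/2)^2 - 1/2),
      pow_le_one₀ (n := 5) (le_of_lt hs) hs1, pow_le_one₀ (n := 7) (le_of_lt hs) hs1]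
  linarith

lemma cos_two_pi_div_five : Real.cos (2*π/5) = (Real.sqrt 5 - 1) / 4 := by
  have h := Real.cos_two_mul (π/5)
  rw [show 2 * (π/5) = 2*π/5 by ring] at h
  rw [h, Real.cos_pi_div_five]
  have h5 : Real.sqrt 5 ^ 2 = 5 := Real.sq_sqrt (by norm_num)
  nlinarith [Real.sqrt_nonneg 5]

lemma cos_three_pi_div_five : Real.cos (3*π/5) = -((Real.sqrt 5 - 1) / 4) := by
  rw [show 3*π/5 = π - 2*π/5 by ring, Real.cos_pi_sub, cos_two_pi_div_five]

lemma sin_three_pi_div_ten : Real.sin (3*π/10) = (1 + Real.sqrt 5) / 4 := by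
  rw [show 3*π/10 = π/2 - π/5 by ring, Real.sin_pi_div_two_sub, Real.cos_pi_div_five]

lemma f1_pos_low {x : ℝ} (hx0 : 0 < x) (hx : x ≤ 3*π/5) : 0 < f1 x := by
  have hpi := Real.pi_pos
  have hs : 0 < Real.sin (x/2) :=
    Real.sin_pos_of_pos_of_lt_pi (by linarith) (by linarith)
  have hS : 0 < Real.sin (3*π/10) :=
    Real.sin_pos_of_pos_of_lt_pi (by linarith) (by linarith)
  have hsle : Real.sin (x/2) ≤ Real.sin (3*π/10) :=
    Real.sin_le_sin_of_le_of_le_pi_div_two (by linarith) (by linarith) (by linarith)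
  have hcge : Real.cos (3*π/10) ≤ Real.cos (x/2) :=
    Real.cos_le_cos_of_nonneg_of_le_pi (by linarith) (by linarith) (by linarith)
  have hCpos : 0 ≤ Real.cos (3*π/10) :=
    Real.cos_nonneg_of_mem_Icc ⟨by linarith, by linarith⟩
  have hcos : Real.cos (3*π/5) ≤ Real.cos x :=
    Real.cos_le_cos_of_nonneg_of_le_pi (by linarith) (by linarith) hx
  have hfrac : (1 + Real.cos (3*π/10)^2) / (8 * Real.sin (3*π/10)^3)
      ≤ (1 + Real.cos (x/2)^2) / (8 * Real.sin (x/2)^3) := by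
    apply div_le_div₀ (by positivity) (by nlinarith) (by positivity)
      (by nlinarith [pow_le_pow_left₀ hs.le hsle 3])
  have hval : 0 < Real.cos (3*π/5) + (1 + Real.cos (3*π/10)^2) / (8 * Real.sin (3*π/10)^3) := by
    have hC : Real.cos (3*π/10) = Real.sin (π/5) := by
      rw [show 3*π/10 = π/2 - π/5 by ring, Real.cos_pi_div_two_sub]
    have hC2 : Real.sin (π/5)^2 = 1 - Real.cos (π/5)^2 := by
      nlinarith [Real.sin_sq_add_cos_sq (π/5)]
    rw [cos_three_pi_div_five, sin_three_pi_div_ten, hC, hC2, Real.cos_pi_div_five]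
    have h5 : Real.sqrt 5 ^ 2 = 5 := Real.sq_sqrt (by norm_num)
    have h5n : 0 ≤ Real.sqrt 5 := Real.sqrt_nonneg 5
    have h5lb : (2:ℝ) < Real.sqrt 5 := by nlinarith
    have hden : (0:ℝ) < 8 * ((1 + Real.sqrt 5)/4)^3 := by positivity
    have key : (Real.sqrt 5 - 1)/4 <
        (1 + (1 - ((1 + Real.sqrt 5)/4)^2)) / (8 * ((1 + Real.sqrt 5)/4)^3) := by
      rw [lt_div_iff₀ hden]
      nlinarith [sq_nonneg (Real.sqrt 5 - 9/4)]
    linarith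
  unfold f1
  calc (0:ℝ) < Real.cos (3*π/5) + (1 + Real.cos (3*π/10)^2) / (8 * Real.sin (3*π/10)^3) := hval
    _ ≤ Real.cos x + (1 + Real.cos (x/2)^2) / (8 * Real.sin (x/2)^3) := by
        exact add_le_add hcos hfrac

lemma f2v_mono : StrictMonoOn f2v (Ioo (0:ℝ) (2*π)) := by
  apply strictMonoOn_of_deriv_pos (convex_Ioo _ _)
  · exact fun x hx => ((hasDerivAt_f2v (sin_half_pos hx).ne').continuousAt).continuousWithinAt
  · intro x hx
    rw [interior_Ioo] at hx
    rw [(hasDerivAt_f2v (sin_half_pos hx).ne').deriv]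
    exact f3v_pos hx

theorem stmt7 (θc : ℝ) (hθc : θc ∈ Ioo (0:ℝ) π) (hcrit : deriv f θc = 0)
    (huniq : ∀ θ ∈ Ioo (0:ℝ) π, deriv f θ = 0 → θ = θc)
    (t1 t2 : ℝ) (h1 : 0 < t1) (h2 : t1 < θc) (h3 : θc < t2) (h4 : t2 < 2*π)
    (hf : f t1 ≥ f t2) :
    t1 + t2 > 2*θc ∧ 2*θc > 6*π/5 := by
  have hpi := Real.pi_pos
  obtain ⟨hθ0, hθπ⟩ := hθc
  have hdf : ∀ x ∈ Ioo (0:ℝ) (2*π), deriv f x = f1 x :=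
    fun x hx => (hasDerivAt_f (sin_half_pos hx).ne').deriv
  have hθmem : θc ∈ Ioo (0:ℝ) (2*π) := ⟨hθ0, by linarith⟩
  have hf1θ : f1 θc = 0 := by rw [← hdf θc hθmem]; exact hcrit
  have hpart2 : 3*π/5 < θc := by
    by_contra h; push_neg at h
    exact absurd hf1θ (ne_of_gt (f1_pos_low hθ0 h))
  have hf1pos : ∀ x, 0 < x → x < θc → 0 < f1 x := by
    intro x hx0 hxθ
    rcases le_or_gt x (3*π/5) with h | h
    · exact f1_pos_low hx0 h
    · by_contra hle; push_neg at hle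
      have hcont : ContinuousOn f1 (Icc (3*π/5) x) := by
        intro y hy
        have hy1 : 0 < y := by linarith [hy.1]
        have hy2 : y < 2*π := by linarith [hy.2]
        exact ((hasDerivAt_f1 (sin_half_pos ⟨hy1, hy2⟩).ne').continuousAt).continuousWithinAt
      obtain ⟨z, hz, hz0⟩ := intermediate_value_Icc' (le_of_lt h) hcont
        ⟨hle, le_of_lt (f1_pos_low (by linarith) le_rfl)⟩
      have hzmem : z ∈ Ioo (0:ℝ) π := ⟨by linarith [hz.1], by linarith [hz.2]⟩
      have hzθ := huniq z hzmem (by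
        rw [hdf z ⟨hzmem.1, by linarith [hzmem.2]⟩]; exact hz0)
      linarith [hz.2]
  -- positivity of the reflected sum of f1
  have hφ : ∀ s, 0 < s → s < θc → 0 < f1 s + f1 (2*θc - s) := by
    intro s hs0 hsθ
    have hanti : StrictAntiOn (fun y => f1 y + f1 (2*θc - y)) (Icc s θc) := by
      apply strictAntiOn_of_deriv_neg (convex_Icc _ _)
      · intro y hy
        have hy1 : (0:ℝ) < y := by linarith [hy.1]
        have hy2 : y < 2*π := by linarith [hy.2]
        have hr1 : (0:ℝ) < 2*θc - y := by linarith [hy.2]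
        have hr2 : 2*θc - y < 2*π := by linarith [hy.1]
        exact (((hasDerivAt_f1 (sin_half_pos ⟨hy1, hy2⟩).ne').add
          (((hasDerivAt_f1 (x := 2*θc - y) (sin_half_pos ⟨hr1, hr2⟩).ne').comp y
            ((hasDerivAt_id y).const_sub (2*θc))))).continuousAt).continuousWithinAt
      · intro y hy
        rw [interior_Icc] at hy
        have hy1 : (0:ℝ) < y := by linarith [hy.1]
        have hy2 : y < 2*π := by linarith [hy.2]
        have hr1 : (0:ℝ) < 2*θc - y := by linarith [hy.2]
        have hr2 : 2*θc - y < 2*π := by linarith [hy.1]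
        have hder : HasDerivAt (fun y => f1 y + f1 (2*θc - y))
            (f2v y + f2v (2*θc - y) * (-1)) y :=
          (hasDerivAt_f1 (sin_half_pos ⟨hy1, hy2⟩).ne').add
            ((hasDerivAt_f1 (x := 2*θc - y) (sin_half_pos ⟨hr1, hr2⟩).ne').comp y
              ((hasDerivAt_id y).const_sub (2*θc)))
        rw [hder.deriv]
        have := f2v_mono ⟨hy1, hy2⟩ ⟨hr1, hr2⟩ (by linarith [hy.2] : y < 2*θc - y)
        linarith
    have := hanti ⟨le_refl s, le_of_lt hsθ⟩ ⟨le_of_lt hsθ, le_refl θc⟩ hsθ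
    simp only [] at this
    have hθv : f1 θc + f1 (2*θc - θc) = 0 := by
      rw [show 2*θc - θc = θc by ring, hf1θ]; ring
    linarith
  constructor
  · by_contra hle; push_neg at hle
    set s := 2*θc - t2 with hsdef
    have hs0 : 0 < s := by simp only [hsdef]; linarith
    have hsθ : s < θc := by simp only [hsdef]; linarith
    have hts : t1 ≤ s := by simp only [hsdef]; linarith
    -- g strictly decreasing on [s, θc]
    have hganti : StrictAntiOn (fun y => f (2*θc - y) - f y) (Icc s θc) := by
      apply strictAntiOn_of_deriv_neg (convex_Icc _ _)
      · intro y hy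
        have hy1 : (0:ℝ) < y := by linarith [hy.1]
        have hy2 : y < 2*π := by linarith [hy.2]
        have hr1 : (0:ℝ) < 2*θc - y := by linarith [hy.2]
        have hr2 : 2*θc - y < 2*π := by linarith [hy.1]
        exact ((((hasDerivAt_f (x := 2*θc - y) (sin_half_pos ⟨hr1, hr2⟩).ne').comp y
          ((hasDerivAt_id y).const_sub (2*θc))).sub
          (hasDerivAt_f (sin_half_pos ⟨hy1, hy2⟩).ne')).continuousAt).continuousWithinAt
      · intro y hy
        rw [interior_Icc] at hy
        have hy1 : (0:ℝ) < y := by linarith [hy.1]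
        have hy2 : y < 2*π := by linarith [hy.2]
        have hr1 : (0:ℝ) < 2*θc - y := by linarith [hy.2]
        have hr2 : 2*θc - y < 2*π := by linarith [hy.1]
        have hder : HasDerivAt (fun y => f (2*θc - y) - f y)
            (f1 (2*θc - y) * (-1) - f1 y) y :=
          (((hasDerivAt_f (x := 2*θc - y) (sin_half_pos ⟨hr1, hr2⟩).ne').comp y
            ((hasDerivAt_id y).const_sub (2*θc)))).sub
            (hasDerivAt_f (sin_half_pos ⟨hy1, hy2⟩).ne')
        rw [hder.deriv]
        have := hφ y hy1 hy.2
        linarith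
    have hgs := hganti ⟨le_refl s, le_of_lt hsθ⟩ ⟨le_of_lt hsθ, le_refl θc⟩ hsθ
    simp only [] at hgs
    rw [show 2*θc - θc = θc by ring, sub_self] at hgs
    have ht2 : 2*θc - s = t2 := by simp only [hsdef]; ring
    rw [ht2] at hgs
    -- f t1 ≤ f s
    have hft1 : f t1 ≤ f s := by
      rcases eq_or_lt_of_le hts with h | h
      · rw [h]
      · have hmono : StrictMonoOn f (Icc t1 s) := by
          apply strictMonoOn_of_deriv_pos (convex_Icc _ _)
          · intro y hy
            have hy1 : (0:ℝ) < y := by linarith [hy.1]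
            have hy2 : y < 2*π := by linarith [hy.2]
            exact ((hasDerivAt_f (sin_half_pos ⟨hy1, hy2⟩).ne').continuousAt).continuousWithinAt
          · intro y hy
            rw [interior_Icc] at hy
            have hy1 : (0:ℝ) < y := by linarith [hy.1]
            have hy2 : y < 2*π := by linarith [hy.2]
            rw [hdf y ⟨hy1, hy2⟩]
            exact hf1pos y hy1 (by linarith [hy.2])
        exact le_of_lt (hmono ⟨le_refl t1, hts⟩ ⟨hts, le_refl s⟩ h)
    linarith
  · linarith
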